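/- For every set C ⊆ V of colluding agents, if each colluding agent independently broadcasts β(c,t) = max(d(c,t) − 2, 1) for all t ≠ c, then the resulting joint broadcast β is admissible. -/

import Mathlib

set_option linter.unusedSectionVars false


open SimpleGraph

namespace Intercept

variable {V : Type*}

/-- The perceived-distance vectors after `s` rounds of the synchronization protocol.
Colluding agents (members of `C`) always broadcast `β`; honest agents start with
`0`/`∞` and update by the distance-vector rule. -/
noncomputable def perceived [Fintype V] [DecidableEq V] (G : SimpleGraph V)
    (C : Finset V) (β : V → V → ℕ∞) : ℕ → V → V → ℕ∞
  | 0 => fun i j => if i ∈ C then β i j else if i = j then 0 else ⊤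
  | s + 1 => fun i j =>
      if i ∈ C then β i j
      else min (perceived G C β s i j)
        (1 + ⨅ k ∈ G.neighborSet i, perceived G C β s k j)

/-- The stationary perceived distances `ρ = ρ^n`. -/
noncomputable def rho [Fintype V] [DecidableEq V] (G : SimpleGraph V)
    (C : Finset V) (β : V → V → ℕ∞) : V → V → ℕ∞ :=
  perceived G C β (Fintype.card V)

/-- `k ∈ b(i,t)`:  `k` is a neighbor of `i` minimizing the (stationary) perceived
distance `ρ(·,t)` among all neighbors of `i`; only defined (satisfiable) for `i ≠ t`. -/
def inForwardSet (G : SimpleGraph V) (ρ : V → V → ℕ∞) (i t k : V) : Prop :=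
  i ≠ t ∧ G.Adj i k ∧ ∀ k', G.Adj i k' → ρ k t ≤ ρ k' t

/-- A corresponding path from `s` to `t`: a walk in `G` such that every honest vertex
forwards to a member of its forwarding set `b(·,t)`. -/
def IsCorrPath [Fintype V] [DecidableEq V] (G : SimpleGraph V) (C : Finset V)
    (β : V → V → ℕ∞) (s t : V) (ℓ : ℕ) (v : ℕ → V) : Prop :=
  v 0 = s ∧ v ℓ = t ∧ (∀ i < ℓ, G.Adj (v i) (v (i + 1))) ∧
    ∀ i < ℓ, v i ∉ C → inForwardSet G (rho G C β) (v i) t (v (i + 1))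

/-- A broadcast is admissible if between every ordered pair of distinct vertices
there is a corresponding path. -/
def Admissible [Fintype V] [DecidableEq V] (G : SimpleGraph V) (C : Finset V)
    (β : V → V → ℕ∞) : Prop :=
  ∀ s t : V, s ≠ t → ∃ ℓ v, IsCorrPath G C β s t ℓ v

/-- The pair `(s,t)` is captured if every corresponding path from `s` to `t`
contains a colluding vertex. -/
def Captured [Fintype V] [DecidableEq V] (G : SimpleGraph V) (C : Finset V)
    (β : V → V → ℕ∞) (s t : V) : Prop :=
  ∀ ℓ v, IsCorrPath G C β s t ℓ v → ∃ i ≤ ℓ, v i ∈ C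

/-- `N(C,β)`: the number of captured ordered pairs of distinct vertices. -/
noncomputable def numCaptured [Fintype V] [DecidableEq V] (G : SimpleGraph V)
    (C : Finset V) (β : V → V → ℕ∞) : ℕ :=
  Set.ncard {p : V × V | p.1 ≠ p.2 ∧ Captured G C β p.1 p.2}


/-- The broadcast in which each colluding agent independently lies by two:
`β*(c,t) = max (d(c,t) - 2) 1` for `t ≠ c`, and `β*(c,c) = 0`. -/
noncomputable def betaStar [DecidableEq V] (G : SimpleGraph V) : V → V → ℕ∞ :=
  fun c t => if c = t then 0 else ((max (G.dist c t - 2) 1 : ℕ) : ℕ∞)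

section lemmas
variable [Fintype V] [DecidableEq V] (G : SimpleGraph V) (C : Finset V) (β : V → V → ℕ∞)

lemma perceived_mem {i : V} (hi : i ∈ C) (s : ℕ) (j : V) :
    perceived G C β s i j = β i j := by
  cases s <;> simp [perceived, hi]

lemma perceived_succ_of_not_mem {i : V} (hi : i ∉ C) (s : ℕ) (j : V) :
    perceived G C β (s+1) i j =
      min (perceived G C β s i j) (1 + ⨅ k ∈ G.neighborSet i, perceived G C β s k j) := by
  simp [perceived, hi]

lemma perceived_succ_le (s : ℕ) (i j : V) :
    perceived G C β (s+1) i j ≤ perceived G C β s i j := by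
  by_cases hi : i ∈ C
  · rw [perceived_mem G C β hi, perceived_mem G C β hi]
  · rw [perceived_succ_of_not_mem G C β hi]; exact min_le_left _ _

lemma perceived_le_of_le {s s' : ℕ} (h : s ≤ s') (i j : V) :
    perceived G C β s' i j ≤ perceived G C β s i j := by
  induction s' with
  | zero => obtain rfl : s = 0 := Nat.le_zero.mp h; rfl
  | succ n ih =>
    rcases Nat.lt_or_ge s (n+1) with h' | h'
    · exact (perceived_succ_le G C β n i j).trans (ih (Nat.lt_succ_iff.mp h'))
    · obtain rfl : s = n + 1 := le_antisymm h h'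
      rfl

lemma betaStar_self (t : V) : betaStar G t t = 0 := by simp [betaStar]

lemma betaStar_of_ne {c t : V} (h : c ≠ t) :
    betaStar G c t = ((max (G.dist c t - 2) 1 : ℕ) : ℕ∞) := by simp [betaStar, h]

lemma perceived_self (s : ℕ) (t : V) : perceived G C (betaStar G) s t t = 0 := by
  induction s with
  | zero => by_cases h : t ∈ C <;> simp [perceived, h, betaStar]
  | succ n ih =>
    by_cases h : t ∈ C
    · rw [perceived_mem _ _ _ h, betaStar_self]
    · rw [perceived_succ_of_not_mem _ _ _ h, ih]; simp

lemma one_le_perceived (s : ℕ) {i t : V} (h : i ≠ t) :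
    1 ≤ perceived G C (betaStar G) s i t := by
  by_cases hc : i ∈ C
  · rw [perceived_mem _ _ _ hc, betaStar_of_ne _ h]
    exact_mod_cast le_max_right _ 1
  · induction s with
    | zero => simp [perceived, hc, h]
    | succ n ih =>
      rw [perceived_succ_of_not_mem _ _ _ hc]
      exact le_min ih le_self_add

lemma dist_le_adj (hG : G.Connected) {i k : V} (h : G.Adj i k) (t : V) :
    G.dist i t ≤ G.dist k t + 1 := by
  have h2 := hG.dist_triangle (u := i) (v := k) (w := t)
  have h1 : G.dist i k = 1 := dist_eq_one_iff_adj.mpr h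
  omega

lemma exists_adj_dist (hG : G.Connected) {i t : V} (h : i ≠ t) :
    ∃ j, G.Adj i j ∧ G.dist j t + 1 = G.dist i t := by
  obtain ⟨p, hp⟩ := hG.exists_walk_length_eq_dist i t
  cases p with
  | nil => exact absurd rfl h
  | @cons _ b _ hadj q =>
    refine ⟨b, hadj, ?_⟩
    have h1 : G.dist b t ≤ q.length := SimpleGraph.dist_le q
    have h2 : G.dist i t ≤ G.dist b t + 1 := dist_le_adj G hG hadj t
    simp [SimpleGraph.Walk.length_cons] at hp
    omega

lemma dist_lt_card (hG : G.Connected) (i t : V) : G.dist i t < Fintype.card V := by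
  obtain ⟨p, hp, hlen⟩ := hG.exists_path_of_dist i t
  exact hlen ▸ hp.length_lt

lemma dist_le_betaStar_add_two (i t : V) :
    (G.dist i t : ℕ∞) ≤ betaStar G i t + 2 := by
  by_cases h : i = t
  · subst h; simp [betaStar_self, SimpleGraph.dist_self]
  · rw [betaStar_of_ne _ h]
    have : G.dist i t ≤ max (G.dist i t - 2) 1 + 2 := by omega
    exact_mod_cast this

lemma dist_le_perceived_add_two (hG : G.Connected) (s : ℕ) (i t : V) :
    (G.dist i t : ℕ∞) ≤ perceived G C (betaStar G) s i t + 2 := by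
  induction s generalizing i with
  | zero =>
    by_cases hc : i ∈ C
    · rw [perceived_mem _ _ _ hc]
      exact dist_le_betaStar_add_two G i t
    · by_cases h : i = t
      · subst h; simp [perceived, hc, SimpleGraph.dist_self]
      · simp [perceived, hc, h]
  | succ n ih =>
    by_cases hc : i ∈ C
    · rw [perceived_mem _ _ _ hc]
      exact dist_le_betaStar_add_two G i t
    · rw [perceived_succ_of_not_mem _ _ _ hc, ← min_add_add_right, le_min_iff]
      refine ⟨ih i, ?_⟩
      by_cases hne : (G.neighborSet i).Nonempty
      · obtain ⟨k₀, hk₀, hmin⟩ := Set.exists_min_image (G.neighborSet i)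
          (fun k => perceived G C (betaStar G) n k t) (Set.toFinite _) hne
        have hinf : perceived G C (betaStar G) n k₀ t ≤
            ⨅ k ∈ G.neighborSet i, perceived G C (betaStar G) n k t := le_iInf₂ hmin
        calc (G.dist i t : ℕ∞) ≤ ((G.dist k₀ t + 1 : ℕ) : ℕ∞) := by
              exact_mod_cast dist_le_adj G hG hk₀ t
          _ = (G.dist k₀ t : ℕ∞) + 1 := by push_cast; ring
          _ ≤ (perceived G C (betaStar G) n k₀ t + 2) + 1 := add_le_add_left (ih k₀) 1
          _ = (1 + perceived G C (betaStar G) n k₀ t) + 2 := by ring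
          _ ≤ (1 + ⨅ k ∈ G.neighborSet i, perceived G C (betaStar G) n k t) + 2 := by
              exact add_le_add_left (add_le_add_right hinf 1) 2
      · have he : G.neighborSet i = ∅ := Set.not_nonempty_iff_eq_empty.mp hne
        simp [he]

lemma perceived_le_dist (hG : G.Connected) :
    ∀ s i t, G.dist i t ≤ s → perceived G C (betaStar G) s i t ≤ (G.dist i t : ℕ∞) := by
  intro s
  induction s with
  | zero =>
    intro i t h
    obtain rfl : i = t := hG.dist_eq_zero_iff.mp (Nat.le_zero.mp h)
    rw [perceived_self]; simp
  | succ n ih =>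
    intro i t h
    by_cases hit : i = t
    · subst hit; rw [perceived_self]; simp
    by_cases hc : i ∈ C
    · rw [perceived_mem _ _ _ hc, betaStar_of_ne _ hit]
      have h1 : 1 ≤ G.dist i t := hG.pos_dist_of_ne hit
      exact_mod_cast (by omega : max (G.dist i t - 2) 1 ≤ G.dist i t)
    · obtain ⟨j, hadj, hdj⟩ := exists_adj_dist G hG hit
      rw [perceived_succ_of_not_mem _ _ _ hc]
      have h2 : perceived G C (betaStar G) n j t ≤ (G.dist j t : ℕ∞) := ih j t (by omega)
      calc min (perceived G C (betaStar G) n i t)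
            (1 + ⨅ k ∈ G.neighborSet i, perceived G C (betaStar G) n k t)
          ≤ 1 + ⨅ k ∈ G.neighborSet i, perceived G C (betaStar G) n k t := min_le_right _ _
        _ ≤ 1 + perceived G C (betaStar G) n j t := by
            exact add_le_add_right (iInf₂_le j hadj) 1
        _ ≤ 1 + (G.dist j t : ℕ∞) := add_le_add_right h2 1
        _ = (G.dist i t : ℕ∞) := by rw [← hdj]; push_cast; ring


end lemmas

section lemmas2
variable [Fintype V] [DecidableEq V] (G : SimpleGraph V) (C : Finset V) (β : V → V → ℕ∞)

lemma rho_le_dist (hG : G.Connected) (i t : V) :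
    rho G C (betaStar G) i t ≤ (G.dist i t : ℕ∞) :=
  perceived_le_dist G C hG _ i t (le_of_lt (dist_lt_card G hG i t))

lemma one_add_iInf_le_perceived (s : ℕ) (hs : s ≤ Fintype.card V) {i t : V}
    (hc : i ∉ C) (h : i ≠ t) :
    1 + ⨅ k ∈ G.neighborSet i, rho G C β k t ≤ perceived G C β s i t := by
  induction s with
  | zero => simp [perceived, hc, h]
  | succ n ih =>
    rw [perceived_succ_of_not_mem _ _ _ hc]
    refine le_min (ih (by omega)) (add_le_add_right ?_ 1)
    exact iInf₂_mono fun k hk => perceived_le_of_le G C β (by omega : n ≤ Fintype.card V) k t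

lemma one_add_iInf_le_rho {i t : V} (hc : i ∉ C) (h : i ≠ t) :
    1 + ⨅ k ∈ G.neighborSet i, rho G C β k t ≤ rho G C β i t :=
  one_add_iInf_le_perceived G C β _ le_rfl hc h

end lemmas2

lemma toNat_add_one_le {a b : ℕ∞} (hb : b ≠ ⊤) (h : 1 + a ≤ b) : a.toNat + 1 ≤ b.toNat := by
  have ha : a ≠ ⊤ := fun hae => hb (top_le_iff.mp (by rw [hae, add_top] at h; exact h))
  lift a to ℕ using ha
  lift b to ℕ using hb
  rw [ENat.toNat_coe, ENat.toNat_coe]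
  rw [add_comm] at h
  exact_mod_cast h

lemma toNat_lt_toNat' {a b : ℕ∞} (hb : b ≠ ⊤) (h : a < b) : a.toNat < b.toNat := by
  have ha : a ≠ ⊤ := (h.trans_le le_top).ne
  lift a to ℕ using ha
  lift b to ℕ using hb
  rw [ENat.toNat_coe, ENat.toNat_coe]
  exact_mod_cast h


section lemmas3
variable [Fintype V] [DecidableEq V] (G : SimpleGraph V) (C : Finset V) (β : V → V → ℕ∞)

lemma isCorrPath_nil (t : V) : IsCorrPath G C β t t 0 (fun _ => t) :=
  ⟨rfl, rfl, fun i hi => absurd hi (Nat.not_lt_zero i), fun i hi => absurd hi (Nat.not_lt_zero i)⟩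

lemma IsCorrPath.cons {u t : V} {ℓ : ℕ} {v : ℕ → V} (h : IsCorrPath G C β u t ℓ v)
    {s : V} (ha : G.Adj s u) (hf : s ∉ C → inForwardSet G (rho G C β) s t u) :
    IsCorrPath G C β s t (ℓ+1) (fun i => if i = 0 then s else v (i-1)) := by
  obtain ⟨h0, hl, hadj, hfwd⟩ := h
  refine ⟨by simp, by simp [hl], ?_, ?_⟩
  · intro i hi
    cases i with
    | zero => simpa [h0] using ha
    | succ m => simpa using hadj m (by omega)
  · intro i hi hC
    cases i with
    | zero =>
      have := hf (by simpa using hC)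
      simpa [h0] using this
    | succ m => simpa using hfwd m (by omega) (by simpa using hC)

lemma main_lemma (hG : G.Connected) :
    ∀ m s t, s ≠ t → 2 * (rho G C (betaStar G) s t).toNat + 3 * G.dist s t ≤ m →
    ∃ ℓ v, IsCorrPath G C (betaStar G) s t ℓ v := by
  intro m
  induction m with
  | zero =>
    intro s t hst hb
    have := hG.pos_dist_of_ne hst
    omega
  | succ m ih =>
    intro s t hst hb
    have hd1 : 1 ≤ G.dist s t := hG.pos_dist_of_ne hst
    obtain ⟨j, hadj, hdj⟩ := exists_adj_dist G hG hst
    have hrle : ∀ x : V, rho G C (betaStar G) x t ≤ (G.dist x t : ℕ∞) :=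
      fun x => rho_le_dist G C hG x t
    have hrnat : ∀ x : V, (rho G C (betaStar G) x t).toNat ≤ G.dist x t :=
      fun x => ENat.toNat_le_of_le_coe (hrle x)
    have hfin : ∀ x : V, rho G C (betaStar G) x t ≠ ⊤ :=
      fun x => ((hrle x).trans_lt (ENat.coe_lt_top _)).ne
    by_cases hsC : s ∈ C
    · by_cases hjt : j = t
      · subst hjt
        exact ⟨1, _, (isCorrPath_nil G C _ j).cons G C _ hadj (fun h => absurd hsC h)⟩
      · have hβ : (rho G C (betaStar G) s t).toNat = max (G.dist s t - 2) 1 := by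
          have : rho G C (betaStar G) s t = betaStar G s t :=
            perceived_mem G C (betaStar G) hsC _ t
          rw [this, betaStar_of_ne _ hst]
          simp
        have h5 : G.dist s t - 2 ≤ (rho G C (betaStar G) s t).toNat := hβ ▸ le_max_left _ _
        have h6 : 1 ≤ (rho G C (betaStar G) s t).toNat := hβ ▸ le_max_right _ _
        have hd2 : 1 ≤ G.dist j t := hG.pos_dist_of_ne hjt
        obtain ⟨ℓ, w, hw⟩ := ih j t hjt (by have := hrnat j; omega)
        have h0 : w 0 = j := hw.1
        exact ⟨ℓ+1, _, hw.cons G C _ (h0 ▸ hadj) (fun h => absurd hsC h)⟩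
    · -- honest source
      obtain ⟨k₀, hk₀, hmin⟩ := Set.exists_min_image (G.neighborSet s)
        (fun k => rho G C (betaStar G) k t) (Set.toFinite _) ⟨j, hadj⟩
      have key : ∃ c, G.Adj s c ∧ (∀ k', G.Adj s k' → rho G C (betaStar G) c t ≤
            rho G C (betaStar G) k' t) ∧
          2 * (rho G C (betaStar G) c t).toNat + 3 * G.dist c t + 1
            ≤ 2 * (rho G C (betaStar G) s t).toNat + 3 * G.dist s t := by
        by_cases hcase : rho G C (betaStar G) j t ≤ rho G C (betaStar G) k₀ t
        · refine ⟨j, hadj, fun k' hk' => hcase.trans (hmin k' hk'), ?_⟩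
          have hminj : ∀ k', G.Adj s k' → rho G C (betaStar G) j t ≤ rho G C (betaStar G) k' t :=
            fun k' hk' => hcase.trans (hmin k' hk')
          have hdec : 1 + rho G C (betaStar G) j t ≤ rho G C (betaStar G) s t :=
            le_trans (add_le_add_right (le_iInf₂ fun k hk => hminj k hk) 1)
              (one_add_iInf_le_rho G C (betaStar G) hsC hst)
          have hdec' : (rho G C (betaStar G) j t).toNat + 1
              ≤ (rho G C (betaStar G) s t).toNat := toNat_add_one_le (hfin s) hdec
          omega
        · push_neg at hcase
          refine ⟨k₀, hk₀, fun k' hk' => hmin k' hk', ?_⟩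
          have hdec : 1 + rho G C (betaStar G) k₀ t ≤ rho G C (betaStar G) s t :=
            le_trans (add_le_add_right (le_iInf₂ fun k hk => hmin k hk) 1)
              (one_add_iInf_le_rho G C (betaStar G) hsC hst)
          have hdec' : (rho G C (betaStar G) k₀ t).toNat + 1
              ≤ (rho G C (betaStar G) s t).toNat := toNat_add_one_le (hfin s) hdec
          have hlt : (rho G C (betaStar G) k₀ t).toNat + 1 ≤ (rho G C (betaStar G) j t).toNat :=
            toNat_lt_toNat' (hfin j) hcase
          have hdk : G.dist k₀ t ≤ (rho G C (betaStar G) k₀ t).toNat + 2 := by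
            have h2 := dist_le_perceived_add_two G C hG (Fintype.card V) k₀ t
            have e1 := ENat.coe_toNat (hfin k₀)
            rw [show perceived G C (betaStar G) (Fintype.card V) k₀ t
                = rho G C (betaStar G) k₀ t from rfl, ← e1] at h2
            exact_mod_cast h2
          have := hrnat j
          omega
      obtain ⟨c, hadjc, hminc, hΦ⟩ := key
      by_cases hct : c = t
      · subst hct
        exact ⟨1, _, (isCorrPath_nil G C _ c).cons G C _ hadjc
          (fun _ => ⟨hst, hadjc, hminc⟩)⟩
      · obtain ⟨ℓ, w, hw⟩ := ih c t hct (by omega)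
        have h0 : w 0 = c := hw.1
        exact ⟨ℓ+1, _, hw.cons G C _ (h0 ▸ hadjc)
          (fun _ => h0 ▸ (⟨hst, hadjc, hminc⟩ : inForwardSet G (rho G C (betaStar G)) s t c))⟩

end lemmas3

/-- For every set `C` of colluding agents, if each colluding agent
independently broadcasts `max (d(c,t) - 2) 1` for all `t ≠ c`, then the resulting
joint broadcast is admissible. -/
theorem independent_lies_admissible [Fintype V] [DecidableEq V] (G : SimpleGraph V)
    (hG : G.Connected) (hn : 2 ≤ Fintype.card V) (C : Finset V) :
    Admissible G C (betaStar G) := by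
  intro s t hst
  exact main_lemma G C hG _ s t hst le_rfl


end Intercept
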